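/- arXiv:2405.00359 — 4 statements merged into one kernel-verified Lean document; each statement's English description precedes it below -/
import Mathlib

section
/- Consider the random update UpdateWithCycle: given nonnegative reals β1, β2 (not both zero), bases B1, B2 of a matroid, and a directed cycle in D_M(B1,B2) with vertices u_0, v_0, ..., u_{l-1}, v_{l-1} (u_i ∈ B1\B2, v_i ∈ B2\B1), with probability β2/(β1+β2) pick i uniformly from {0,...,l-1} and set B1' = B1 + v_i - u_i, B2' = B2; otherwise pick i uniformly and set B1' = B1, B2' = B2 + u_{i+1} - v_i (indices mod l). Then E[β1·1_{B1'} + β2·1_{B2'}] = β1·1_{B1} + β2·1_{B2}, where 1_S denotes the characteristic vector of S. -/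
open Set Finset

/-- The indicator (characteristic) vector of a set, with real values. -/
noncomputable def charVec {α : Type*} (S : Set α) : α → ℝ :=
  S.indicator (fun _ => (1 : ℝ))

lemma charVec_exchange {α : Type*} {S : Set α} {a b : α} (ha : a ∉ S) (hb : b ∈ S)
    (w : α) :
    charVec (insert a (S \ {b})) w = charVec S w + charVec {a} w - charVec {b} w := by
  simp only [charVec, Set.indicator_apply, Set.mem_insert_iff, Set.mem_diff,
    Set.mem_singleton_iff]
  by_cases hwa : w = a <;> by_cases hwb : w = b <;> by_cases hwS : w ∈ S <;>
    simp_all <;> norm_num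

/-- `UpdateWithCycle` preserves the point in expectation: given coefficients
`β1, β2 ≥ 0` with `β1 + β2 > 0`, bases `B1, B2` of a matroid `M`, and a directed cycle
in `D_M(B1, B2)` with vertices `u 0, v 0, …, u (l-1), v (l-1)` (`u i ∈ B1 \ B2`,
`v i ∈ B2 \ B1`), the update which with probability `β2 / (β1 + β2)` replaces `B1` by
`B1 + v i - u i` for uniformly random `i`, and otherwise replaces `B2` by
`B2 + u (i+1) - v i` for uniformly random `i`, satisfies
`E[β1 • 1_{B1'} + β2 • 1_{B2'}] = β1 • 1_{B1} + β2 • 1_{B2}` (coordinatewise). -/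
theorem updateWithCycle_expectation {α : Type*} (M : Matroid α) (B1 B2 : Set α)
    (hB1 : M.IsBase B1) (hB2 : M.IsBase B2)
    (β1 β2 : ℝ) (hβ1 : 0 ≤ β1) (hβ2 : 0 ≤ β2) (hβ : 0 < β1 + β2)
    (l : ℕ) [NeZero l] (u v : ZMod l → α)
    (hu : ∀ i, u i ∈ B1 \ B2) (hv : ∀ i, v i ∈ B2 \ B1)
    (he1 : ∀ i, M.Indep (insert (v i) (B1 \ {u i})))
    (he2 : ∀ i, M.Indep (insert (u (i + 1)) (B2 \ {v i}))) :
    ∀ w : α,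
      (β2 / (β1 + β2)) * ((l : ℝ)⁻¹ *
          ∑ i : ZMod l, (β1 * charVec (insert (v i) (B1 \ {u i})) w + β2 * charVec B2 w))
      + (β1 / (β1 + β2)) * ((l : ℝ)⁻¹ *
          ∑ i : ZMod l, (β1 * charVec B1 w + β2 * charVec (insert (u (i + 1)) (B2 \ {v i})) w))
      = β1 * charVec B1 w + β2 * charVec B2 w := by
  intro w
  have hl : (l : ℝ) ≠ 0 := Nat.cast_ne_zero.mpr (NeZero.ne l)
  have hβ' : β1 + β2 ≠ 0 := ne_of_gt hβ
  set c1 := charVec B1 w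
  set c2 := charVec B2 w
  set Su := ∑ i : ZMod l, charVec {u i} w with hSu
  set Sv := ∑ i : ZMod l, charVec {v i} w with hSv
  have hcard : (Finset.univ : Finset (ZMod l)).card = l := by
    simpa using ZMod.card l
  have hSu' : ∑ i : ZMod l, charVec {u (i + 1)} w = Su := by
    rw [hSu]
    exact Fintype.sum_equiv (Equiv.addRight (1 : ZMod l)) _ _ (fun i => rfl)
  have h1 : ∑ i : ZMod l, (β1 * charVec (insert (v i) (B1 \ {u i})) w + β2 * c2)
      = (l : ℝ) * (β1 * c1 + β2 * c2) + β1 * (Sv - Su) := by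
    have : ∀ i : ZMod l,
        β1 * charVec (insert (v i) (B1 \ {u i})) w + β2 * c2
        = (β1 * c1 + β2 * c2) + β1 * (charVec {v i} w - charVec {u i} w) := by
      intro i
      rw [charVec_exchange (hv i).2 (hu i).1 w]
      ring
    rw [Finset.sum_congr rfl (fun i _ => this i), Finset.sum_add_distrib,
      Finset.sum_const, hcard, ← Finset.mul_sum, Finset.sum_sub_distrib, ← hSv, ← hSu]
    push_cast
    ring
  have h2 : ∑ i : ZMod l, (β1 * c1 + β2 * charVec (insert (u (i + 1)) (B2 \ {v i})) w)
      = (l : ℝ) * (β1 * c1 + β2 * c2) + β2 * (Su - Sv) := by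
    have : ∀ i : ZMod l,
        β1 * c1 + β2 * charVec (insert (u (i + 1)) (B2 \ {v i})) w
        = (β1 * c1 + β2 * c2) + β2 * (charVec {u (i + 1)} w - charVec {v i} w) := by
      intro i
      rw [charVec_exchange (hu (i + 1)).2 (hv i).1 w]
      ring
    rw [Finset.sum_congr rfl (fun i _ => this i), Finset.sum_add_distrib,
      Finset.sum_const, hcard, ← Finset.mul_sum, Finset.sum_sub_distrib, hSu', ← hSv]
    push_cast
    ring
  rw [h1, h2]
  field_simp
  ring
end

section
/- Let x ∈ R^n_+ and let X = (X_1,...,X_n) be a nonnegative random vector with E[X] = x such that X - x almost surely has at most one positive coordinate and at most one negative coordinate. Then E[F(X)] ≥ F(x) for any function F that is the multilinear extension of a submodular set function. -/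
open Finset MeasureTheory

/-- A set function `f` on a finite ground set `V` is submodular. -/
def Submodular {V : Type*} [Fintype V] [DecidableEq V] (f : Finset V → ℝ) : Prop :=
  ∀ A B : Finset V, f (A ∪ B) + f (A ∩ B) ≤ f A + f B

/-- The multilinear extension `F` of a set function `f`. -/
def multilinearExt {V : Type*} [Fintype V] [DecidableEq V] (f : Finset V → ℝ)
    (x : V → ℝ) : ℝ :=
  ∑ S : Finset V, f S * ((∏ v ∈ S, x v) * ∏ v ∈ Sᶜ, (1 - x v))

section Aux

variable {V : Type*} [Fintype V] [DecidableEq V]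

/-- Splitting the multilinear extension along one coordinate. -/
lemma mle_split (f : Finset V → ℝ) (y : V → ℝ) (v : V) :
    multilinearExt f y
      = y v * multilinearExt f (Function.update y v 1)
        + (1 - y v) * multilinearExt f (Function.update y v 0) := by
  unfold multilinearExt
  rw [Finset.mul_sum, Finset.mul_sum, ← Finset.sum_add_distrib]
  refine (Finset.sum_congr rfl fun S _ => ?_)
  by_cases hv : v ∈ S
  · have hv' : v ∉ Sᶜ := by simp [hv]
    have e1 : ∀ c : ℝ, ∏ u ∈ Sᶜ, (1 - Function.update y v c u) = ∏ u ∈ Sᶜ, (1 - y u) :=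
      fun c => Finset.prod_congr rfl fun u hu => by
        rw [Function.update_of_ne (by rintro rfl; exact hv' hu)]
    have e2 : ∀ c : ℝ, ∏ u ∈ S, Function.update y v c u = c * ∏ u ∈ S.erase v, y u := by
      intro c
      rw [← Finset.mul_prod_erase _ _ hv, Function.update_self]
      exact congrArg (c * ·)
        (Finset.prod_congr rfl fun u hu => Function.update_of_ne (Finset.mem_erase.mp hu).1 _ _)
    have e3 : ∏ u ∈ S, y u = y v * ∏ u ∈ S.erase v, y u := (Finset.mul_prod_erase _ _ hv).symm
    rw [e1, e1, e2, e2, e3]; ring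
  · have hv' : v ∈ Sᶜ := by simpa using hv
    have e1 : ∀ c : ℝ, ∏ u ∈ S, Function.update y v c u = ∏ u ∈ S, y u :=
      fun c => Finset.prod_congr rfl fun u hu =>
        Function.update_of_ne (by rintro rfl; exact hv hu) _ _
    have e2 : ∀ c : ℝ, ∏ u ∈ Sᶜ, (1 - Function.update y v c u)
        = (1 - c) * ∏ u ∈ Sᶜ.erase v, (1 - y u) := by
      intro c
      rw [← Finset.mul_prod_erase _ _ hv', Function.update_self]
      exact congrArg ((1 - c) * ·)
        (Finset.prod_congr rfl fun u hu => by
          rw [Function.update_of_ne (Finset.mem_erase.mp hu).1])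
    have e3 : ∏ u ∈ Sᶜ, (1 - y u) = (1 - y v) * ∏ u ∈ Sᶜ.erase v, (1 - y u) :=
      (Finset.mul_prod_erase _ _ hv').symm
    rw [e1, e1, e2, e2, e3]; ring

/-- If `y` agrees with `x` off `v`, `F y` is affine in `y v`. -/
lemma mle_single (f : Finset V → ℝ) (x y : V → ℝ) (v : V) (h : ∀ u, u ≠ v → y u = x u) :
    multilinearExt f y = multilinearExt f x
      + (y v - x v) * (multilinearExt f (Function.update x v 1)
        - multilinearExt f (Function.update x v 0)) := by
  have hy : ∀ c : ℝ, Function.update y v c = Function.update x v c := by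
    intro c; funext u
    rcases eq_or_ne u v with rfl | hu
    · simp
    · rw [Function.update_of_ne hu, Function.update_of_ne hu, h u hu]
  rw [mle_split f y v, mle_split f x v, hy, hy]; ring

/-- Second-order exact expansion when `y` agrees with `x` off `{v, w}`. -/
lemma mle_double (f : Finset V → ℝ) (x y : V → ℝ) (v w : V) (hvw : v ≠ w)
    (h : ∀ u, u ≠ v → u ≠ w → y u = x u) :
    multilinearExt f y = multilinearExt f x
      + (y v - x v) * (multilinearExt f (Function.update x v 1)
          - multilinearExt f (Function.update x v 0))
      + (y w - x w) * (multilinearExt f (Function.update x w 1)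
          - multilinearExt f (Function.update x w 0))
      + (y v - x v) * (y w - x w) *
        (multilinearExt f (Function.update (Function.update x v 1) w 1)
         - multilinearExt f (Function.update (Function.update x v 1) w 0)
         - multilinearExt f (Function.update (Function.update x v 0) w 1)
         + multilinearExt f (Function.update (Function.update x v 0) w 0)) := by
  have hwv : w ≠ v := hvw.symm
  have key : ∀ z : V → ℝ, (∀ u, u ≠ v → u ≠ w → z u = x u) →
      multilinearExt f z
        = z v * (z w * multilinearExt f (Function.update (Function.update x v 1) w 1)
            + (1 - z w) * multilinearExt f (Function.update (Function.update x v 1) w 0))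
          + (1 - z v) * (z w * multilinearExt f (Function.update (Function.update x v 0) w 1)
            + (1 - z w) * multilinearExt f (Function.update (Function.update x v 0) w 0)) := by
    intro z hz
    have h2 : ∀ a b : ℝ, Function.update (Function.update z v a) w b
        = Function.update (Function.update x v a) w b := by
      intro a b; funext u
      rcases eq_or_ne u w with rfl | huw
      · simp
      rcases eq_or_ne u v with rfl | huv
      · rw [Function.update_of_ne huw, Function.update_of_ne huw,
          Function.update_self, Function.update_self]
      · rw [Function.update_of_ne huw, Function.update_of_ne huw,
          Function.update_of_ne huv, Function.update_of_ne huv, hz u huv huw]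
    have h1 : ∀ c : ℝ, (Function.update z v c) w = z w :=
      fun c => Function.update_of_ne hwv _ _
    rw [mle_split f z v, mle_split f (Function.update z v 1) w,
      mle_split f (Function.update z v 0) w, h1, h1, h2, h2, h2, h2]
  have ey := key y h
  have ex := key x (fun _ _ _ => rfl)
  have e1 : ∀ a : ℝ, multilinearExt f (Function.update x v a)
      = x w * multilinearExt f (Function.update (Function.update x v a) w 1)
        + (1 - x w) * multilinearExt f (Function.update (Function.update x v a) w 0) := by
    intro a
    rw [mle_split f (Function.update x v a) w, Function.update_of_ne hwv]
  have e2 : ∀ b : ℝ, multilinearExt f (Function.update x w b)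
      = x v * multilinearExt f (Function.update (Function.update x v 1) w b)
        + (1 - x v) * multilinearExt f (Function.update (Function.update x v 0) w b) := by
    intro b
    rw [mle_split f (Function.update x w b) v, Function.update_of_ne hvw,
      Function.update_comm hvw, Function.update_comm hvw]
  rw [ey, ex, e1, e1, e2, e2]; ring

/-- The mixed second difference of the multilinear extension of a submodular function is
nonpositive on the cube. -/
lemma M_nonpos (f : Finset V → ℝ) (hf : Submodular f) (x : V → ℝ)
    (hx0 : ∀ u, 0 ≤ x u) (hx1 : ∀ u, x u ≤ 1) (v w : V) (hvw : v ≠ w) :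
    multilinearExt f (Function.update (Function.update x v 1) w 1)
      - multilinearExt f (Function.update (Function.update x v 1) w 0)
      - multilinearExt f (Function.update (Function.update x v 0) w 1)
      + multilinearExt f (Function.update (Function.update x v 0) w 0) ≤ 0 := by
  classical
  -- weight of a subset S for a vector z
  set A : (V → ℝ) → Finset V → ℝ :=
    fun z S => (∏ u ∈ S, z u) * ∏ u ∈ Sᶜ, (1 - z u) with hA
  set z11 := Function.update (Function.update x v 1) w 1
  set z10 := Function.update (Function.update x v 1) w 0
  set z01 := Function.update (Function.update x v 0) w 1
  set z00 := Function.update (Function.update x v 0) w 0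
  have hz : ∀ a b : ℝ, ∀ u, u ≠ v → u ≠ w →
      Function.update (Function.update x v a) w b u = x u := by
    intro a b u huv huw
    rw [Function.update_of_ne huw, Function.update_of_ne huv]
  have hzv : ∀ a b : ℝ, Function.update (Function.update x v a) w b v = a := by
    intro a b; rw [Function.update_of_ne hvw, Function.update_self]
  have hzw : ∀ a b : ℝ, Function.update (Function.update x v a) w b w = b := by
    intro a b; rw [Function.update_self]
  -- the per-subset combined weight
  set g : Finset V → ℝ := fun S => f S * (A z11 S - A z10 S - A z01 S + A z00 S) with hg
  have hsum : multilinearExt f z11 - multilinearExt f z10 - multilinearExt f z01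
      + multilinearExt f z00 = ∑ S : Finset V, g S := by
    unfold multilinearExt
    rw [← Finset.sum_sub_distrib, ← Finset.sum_sub_distrib, ← Finset.sum_add_distrib]
    exact Finset.sum_congr rfl fun S _ => by simp only [hg, hA]; ring
  rw [hsum]
  -- regroup the sum over all subsets by quadruples
  set s₀ : Finset V := (Finset.univ.erase v).erase w with hs₀
  have hws₀ : w ∉ s₀ := Finset.notMem_erase _ _
  have hvs₀' : v ∉ insert w s₀ := by
    simp [hs₀, hvw, Finset.mem_erase]
  have huniv : (Finset.univ : Finset V) = insert v (insert w s₀) := by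
    rw [hs₀, Finset.insert_erase (Finset.mem_erase.mpr ⟨hvw.symm, Finset.mem_univ w⟩),
      Finset.insert_erase (Finset.mem_univ v)]
  have hsplit : ∑ S : Finset V, g S
      = ∑ T ∈ s₀.powerset, (g T + g (insert w T) + (g (insert v T) + g (insert v (insert w T)))) := by
    calc ∑ S : Finset V, g S = ∑ S ∈ (Finset.univ : Finset (Finset V)), g S := rfl
      _ = ∑ S ∈ (insert v (insert w s₀)).powerset, g S := by rw [← huniv, Finset.powerset_univ]
      _ = (∑ T ∈ (insert w s₀).powerset, g T)
          + ∑ T ∈ (insert w s₀).powerset, g (insert v T) := Finset.sum_powerset_insert hvs₀' _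
      _ = ((∑ T ∈ s₀.powerset, g T) + ∑ T ∈ s₀.powerset, g (insert w T))
          + ((∑ T ∈ s₀.powerset, g (insert v T))
            + ∑ T ∈ s₀.powerset, g (insert v (insert w T))) := by
          rw [Finset.sum_powerset_insert hws₀, Finset.sum_powerset_insert hws₀]
      _ = _ := by
          rw [← Finset.sum_add_distrib, ← Finset.sum_add_distrib, ← Finset.sum_add_distrib]
  rw [hsplit]
  apply Finset.sum_nonpos
  intro T hT
  have hTs : T ⊆ s₀ := Finset.mem_powerset.mp hT
  have hvT : v ∉ T := fun h => (Finset.mem_erase.mp (Finset.mem_of_mem_erase (hTs h))).1 rfl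
  have hwT : w ∉ T := fun h => (Finset.mem_erase.mp (hTs h)).1 rfl
  have hvT' : v ∉ insert w T := by simp [hvw, hvT]
  -- products over the sets
  have hTx : ∀ u ∈ T, u ≠ v ∧ u ≠ w := fun u hu =>
    ⟨fun h => hvT (h ▸ hu), fun h => hwT (h ▸ hu)⟩
  set P : ℝ := ∏ u ∈ (Tᶜ.erase v).erase w, (1 - x u) with hP
  set Q : ℝ := (∏ u ∈ T, x u) * P with hQ
  -- generic evaluations
  have prodS : ∀ a b : ℝ, ∏ u ∈ T, Function.update (Function.update x v a) w b u
      = ∏ u ∈ T, x u :=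
    fun a b => Finset.prod_congr rfl fun u hu => hz a b u (hTx u hu).1 (hTx u hu).2
  have prodSv : ∀ a b : ℝ, ∏ u ∈ insert v T, Function.update (Function.update x v a) w b u
      = a * ∏ u ∈ T, x u := by
    intro a b; rw [Finset.prod_insert hvT, hzv, prodS]
  have prodSw : ∀ a b : ℝ, ∏ u ∈ insert w T, Function.update (Function.update x v a) w b u
      = b * ∏ u ∈ T, x u := by
    intro a b; rw [Finset.prod_insert hwT, hzw, prodS]
  have prodSvw : ∀ a b : ℝ,
      ∏ u ∈ insert v (insert w T), Function.update (Function.update x v a) w b u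
      = a * (b * ∏ u ∈ T, x u) := by
    intro a b; rw [Finset.prod_insert hvT', hzv, prodSw]
  -- complements
  have cC : ∀ a b : ℝ, ∏ u ∈ (Tᶜ.erase v).erase w,
      (1 - Function.update (Function.update x v a) w b u) = P := by
    intro a b
    refine Finset.prod_congr rfl fun u hu => ?_
    have huw : u ≠ w := (Finset.mem_erase.mp hu).1
    have huv : u ≠ v := (Finset.mem_erase.mp (Finset.mem_of_mem_erase hu)).1
    rw [hz a b u huv huw]
  have hvTc : v ∈ Tᶜ := Finset.mem_compl.mpr hvT
  have hwTcv : w ∈ Tᶜ.erase v := Finset.mem_erase.mpr ⟨hvw.symm, Finset.mem_compl.mpr hwT⟩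
  have compT : ∀ a b : ℝ, ∏ u ∈ Tᶜ, (1 - Function.update (Function.update x v a) w b u)
      = (1 - a) * ((1 - b) * P) := by
    intro a b
    rw [← Finset.mul_prod_erase _ _ hvTc, hzv, ← Finset.mul_prod_erase _ _ hwTcv, hzw, cC]
  have compTv : ∀ a b : ℝ,
      ∏ u ∈ (insert v T)ᶜ, (1 - Function.update (Function.update x v a) w b u)
      = (1 - b) * P := by
    intro a b
    rw [Finset.compl_insert, ← Finset.mul_prod_erase _ _ hwTcv, hzw, cC]
  have hwTc : w ∈ Tᶜ := Finset.mem_compl.mpr hwT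
  have hvTcw : v ∈ Tᶜ.erase w := Finset.mem_erase.mpr ⟨hvw, hvTc⟩
  have compTw : ∀ a b : ℝ,
      ∏ u ∈ (insert w T)ᶜ, (1 - Function.update (Function.update x v a) w b u)
      = (1 - a) * P := by
    intro a b
    rw [Finset.compl_insert, ← Finset.mul_prod_erase _ _ hvTcw, hzv,
      Finset.erase_right_comm, cC]
  have compTvw : ∀ a b : ℝ,
      ∏ u ∈ (insert v (insert w T))ᶜ, (1 - Function.update (Function.update x v a) w b u)
      = P := by
    intro a b
    rw [Finset.compl_insert, Finset.compl_insert, Finset.erase_right_comm, cC]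
  -- now evaluate g on the four sets
  have gT : g T = f T * Q := by
    simp only [hg, hA]
    rw [prodS, prodS, prodS, prodS, compT, compT, compT, compT]
    simp only [hQ]; ring
  have gTv : g (insert v T) = -(f (insert v T) * Q) := by
    simp only [hg, hA]
    rw [prodSv, prodSv, prodSv, prodSv, compTv, compTv, compTv, compTv]
    simp only [hQ]; ring
  have gTw : g (insert w T) = -(f (insert w T) * Q) := by
    simp only [hg, hA]
    rw [prodSw, prodSw, prodSw, prodSw, compTw, compTw, compTw, compTw]
    simp only [hQ]; ring
  have gTvw : g (insert v (insert w T)) = f (insert v (insert w T)) * Q := by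
    simp only [hg, hA]
    rw [prodSvw, prodSvw, prodSvw, prodSvw, compTvw, compTvw, compTvw, compTvw]
    simp only [hQ]; ring
  rw [gT, gTv, gTw, gTvw]
  have hQ0 : 0 ≤ Q := by
    refine mul_nonneg (Finset.prod_nonneg fun u _ => hx0 u)
      (Finset.prod_nonneg fun u _ => by linarith [hx1 u])
  have hsub := hf (insert v T) (insert w T)
  have hcup : insert v T ∪ insert w T = insert v (insert w T) := by
    ext u; simp only [Finset.mem_union, Finset.mem_insert]; tauto
  have hcap : insert v T ∩ insert w T = T := by
    ext u
    simp only [Finset.mem_inter, Finset.mem_insert]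
    constructor
    · rintro ⟨rfl | hu, h2⟩
      · rcases h2 with h2 | h2
        · exact absurd h2 hvw
        · exact absurd h2 hvT
      · exact hu
    · exact fun hu => ⟨Or.inr hu, Or.inr hu⟩
  rw [hcup, hcap] at hsub
  nlinarith [hsub, hQ0]

/-- The pointwise first-order bound. -/
lemma mle_pointwise (f : Finset V → ℝ) (hf : Submodular f) (x y : V → ℝ)
    (hx0 : ∀ u, 0 ≤ x u) (hx1 : ∀ u, x u ≤ 1)
    (hpos : ∀ v w, x v < y v → x w < y w → v = w)
    (hneg : ∀ v w, y v < x v → y w < x w → v = w) :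
    multilinearExt f x + ∑ u : V, (multilinearExt f (Function.update x u 1)
      - multilinearExt f (Function.update x u 0)) * (y u - x u) ≤ multilinearExt f y := by
  classical
  set D : V → ℝ := fun u => multilinearExt f (Function.update x u 1)
    - multilinearExt f (Function.update x u 0) with hD
  by_cases hP : ∃ v, x v < y v
  · obtain ⟨v, hv⟩ := hP
    by_cases hN : ∃ w, y w < x w
    · obtain ⟨w, hw⟩ := hN
      have hvw : v ≠ w := fun h => absurd (h ▸ hv) (not_lt.mpr (le_of_lt hw))
      have hoff : ∀ u, u ≠ v → u ≠ w → y u = x u := by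
        intro u huv huw
        rcases lt_trichotomy (x u) (y u) with h | h | h
        · exact absurd (hpos u v h hv) huv
        · exact h.symm
        · exact absurd (hneg u w h hw) huw
      have hsum : ∑ u : V, D u * (y u - x u) = D v * (y v - x v) + D w * (y w - x w) := by
        rw [← Finset.sum_subset (Finset.subset_univ ({v, w} : Finset V)) (fun u _ hu => by
          simp only [Finset.mem_insert, Finset.mem_singleton, not_or] at hu
          rw [hoff u hu.1 hu.2]; ring)]
        exact Finset.sum_pair hvw
      rw [hsum, mle_double f x y v w hvw hoff]
      have hM := M_nonpos f hf x hx0 hx1 v w hvw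
      have key : 0 ≤ (y v - x v) * ((y w - x w) *
          (multilinearExt f (Function.update (Function.update x v 1) w 1)
           - multilinearExt f (Function.update (Function.update x v 1) w 0)
           - multilinearExt f (Function.update (Function.update x v 0) w 1)
           + multilinearExt f (Function.update (Function.update x v 0) w 0))) :=
        mul_nonneg (sub_pos.mpr hv).le
          (by nlinarith [(sub_neg.mpr hw).le, hM])
      simp only [hD]
      linarith [key]
    · push_neg at hN
      have hoff : ∀ u, u ≠ v → y u = x u := by
        intro u huv
        rcases lt_trichotomy (x u) (y u) with h | h | h
        · exact absurd (hpos u v h hv) huv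
        · exact h.symm
        · exact absurd (hN u) (not_le.mpr h)
      have hsum : ∑ u : V, D u * (y u - x u) = D v * (y v - x v) := by
        refine Finset.sum_eq_single_of_mem v (Finset.mem_univ v) ?_
        intro u _ hu
        rw [hoff u hu]; ring
      rw [hsum, mle_single f x y v hoff]
      simp only [hD]; linarith
  · push_neg at hP
    by_cases hN : ∃ w, y w < x w
    · obtain ⟨w, hw⟩ := hN
      have hoff : ∀ u, u ≠ w → y u = x u := by
        intro u huw
        rcases lt_trichotomy (x u) (y u) with h | h | h
        · exact absurd (hP u) (not_le.mpr h)
        · exact h.symm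
        · exact absurd (hneg u w h hw) huw
      have hsum : ∑ u : V, D u * (y u - x u) = D w * (y w - x w) := by
        refine Finset.sum_eq_single_of_mem w (Finset.mem_univ w) ?_
        intro u _ hu
        rw [hoff u hu]; ring
      rw [hsum, mle_single f x y w hoff]
      simp only [hD]; linarith
    · push_neg at hN
      have hxy : y = x := funext fun u => le_antisymm (hP u) (hN u)
      subst hxy
      simp

end Aux

/-- Lemma VI.2 of Chekuri–Vondrák–Zenklusen: if `X` is a random nonnegative vector
(taking values in `[0,1]^V`) with `E[X] = x` such that almost surely `X - x` has at most
one positive coordinate and at most one negative coordinate, then `E[F(X)] ≥ F(x)` for the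
multilinear extension `F` of any submodular function `f`. -/
theorem expectation_multilinear_ge {V : Type*} [Fintype V] [DecidableEq V]
    (f : Finset V → ℝ) (hf : Submodular f)
    {Ω : Type*} [MeasurableSpace Ω] (μ : Measure Ω) [IsProbabilityMeasure μ]
    (X : Ω → V → ℝ) (x : V → ℝ)
    (hXnonneg : ∀ᵐ ω ∂μ, ∀ v, 0 ≤ X ω v) (hXle : ∀ᵐ ω ∂μ, ∀ v, X ω v ≤ 1)
    (hXint : ∀ v, Integrable (fun ω => X ω v) μ)
    (hmean : ∀ v, (∫ ω, X ω v ∂μ) = x v)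
    (hpos : ∀ᵐ ω ∂μ, ∀ v w, x v < X ω v → x w < X ω w → v = w)
    (hneg : ∀ᵐ ω ∂μ, ∀ v w, X ω v < x v → X ω w < x w → v = w)
    (hFint : Integrable (fun ω => multilinearExt f (X ω)) μ) :
    multilinearExt f x ≤ ∫ ω, multilinearExt f (X ω) ∂μ := by
  classical
  have hx0 : ∀ u, 0 ≤ x u := by
    intro u
    rw [← hmean u]
    exact integral_nonneg_of_ae (hXnonneg.mono fun ω h => h u)
  have hx1 : ∀ u, x u ≤ 1 := by
    intro u
    rw [← hmean u]
    calc ∫ ω, X ω u ∂μ ≤ ∫ _, (1 : ℝ) ∂μ :=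
          integral_mono_ae (hXint u) (integrable_const 1) (hXle.mono fun ω h => h u)
      _ = 1 := by simp
  set D : V → ℝ := fun u => multilinearExt f (Function.update x u 1)
    - multilinearExt f (Function.update x u 0) with hD
  have hintu : ∀ u : V, Integrable (fun ω => D u * (X ω u - x u)) μ :=
    fun u => (((hXint u).sub (integrable_const _)).const_mul _)
  have hintsum : Integrable (fun ω => ∑ u : V, D u * (X ω u - x u)) μ :=
    integrable_finset_sum _ fun u _ => hintu u
  have hint : Integrable (fun ω => multilinearExt f x + ∑ u : V, D u * (X ω u - x u)) μ :=
    (integrable_const _).add hintsum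
  have hpt : ∀ᵐ ω ∂μ, multilinearExt f x + ∑ u : V, D u * (X ω u - x u)
      ≤ multilinearExt f (X ω) := by
    filter_upwards [hpos, hneg] with ω h1 h2
    exact mle_pointwise f hf x (X ω) hx0 hx1 h1 h2
  have hmono := integral_mono_ae hint hFint hpt
  have hcalc : (∫ ω, (multilinearExt f x + ∑ u : V, D u * (X ω u - x u)) ∂μ)
      = multilinearExt f x := by
    rw [integral_add (integrable_const _) hintsum, integral_const,
      integral_finset_sum _ (fun u _ => hintu u)]
    have hz : ∀ u ∈ (Finset.univ : Finset V), (∫ ω, D u * (X ω u - x u) ∂μ) = 0 := by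
      intro u _
      rw [integral_const_mul, integral_sub (hXint u) (integrable_const _), hmean u,
        integral_const]
      simp
    rw [Finset.sum_congr rfl hz]
    simp
  rwa [hcalc] at hmono
end

section
/- Let f be a submodular function on V with multilinear extension F, and let x = Σ_{i=1}^t β_i 1_{B_i} be a convex combination of characteristic vectors of bases of a matroid M. Suppose B1 and B2 are replaced by random bases B1', B2' via the UpdateWithCycle procedure (using a directed cycle in D_M(B1,B2)), with B_i' = B_i for i ≥ 3, and let x' = Σ_{i=1}^t β_i 1_{B_i'}. Then E[F(x')] ≥ F(x). -/
open Finset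

section Aux

variable {α : Type*} [Fintype α] [DecidableEq α]

/-- Weight of a subset `S` of `U` under `x`. -/
noncomputable def UWCW (x : α → ℝ) (U S : Finset α) : ℝ :=
  (∏ v ∈ S, x v) * ∏ v ∈ U \ S, (1 - x v)

lemma UWCW_congr {x y : α → ℝ} {U : Finset α} (h : ∀ w ∈ U, x w = y w)
    {S : Finset α} (hS : S ⊆ U) : UWCW x U S = UWCW y U S := by
  unfold UWCW
  congr 1
  · exact Finset.prod_congr rfl fun w hw => h w (hS hw)
  · exact Finset.prod_congr rfl fun w hw => by rw [h w (Finset.mem_sdiff.1 hw).1]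

lemma UWCW_nonneg {x : α → ℝ} (h0 : ∀ w, 0 ≤ x w) (h1 : ∀ w, x w ≤ 1)
    (U S : Finset α) : 0 ≤ UWCW x U S :=
  mul_nonneg (Finset.prod_nonneg fun w _ => h0 w)
    (Finset.prod_nonneg fun w _ => by linarith [h1 w])

lemma multilinearExt_eq_UWCW (f : Finset α → ℝ) (x : α → ℝ) :
    multilinearExt f x = ∑ S ∈ (univ : Finset α).powerset, f S * UWCW x univ S := by
  rw [Finset.powerset_univ]
  exact Finset.sum_congr rfl fun S _ => by
    simp only [multilinearExt, UWCW, Finset.compl_eq_univ_sdiff]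

lemma UWC_peel (g : Finset α → ℝ) (x : α → ℝ) {E : Finset α} {a : α} (ha : a ∉ E) :
    ∑ S ∈ (insert a E).powerset, g S * UWCW x (insert a E) S
      = ∑ S ∈ E.powerset, (x a * g (insert a S) + (1 - x a) * g S) * UWCW x E S := by
  rw [Finset.sum_powerset_insert ha, ← Finset.sum_add_distrib]
  refine Finset.sum_congr rfl fun S hS => ?_
  have hSE : S ⊆ E := Finset.mem_powerset.1 hS
  have haS : a ∉ S := fun h => ha (hSE h)
  have h1 : UWCW x (insert a E) S = (1 - x a) * UWCW x E S := by
    unfold UWCW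
    rw [Finset.insert_sdiff_of_notMem _ haS,
      Finset.prod_insert (fun h => ha (Finset.mem_sdiff.1 h).1)]
    ring
  have h2 : UWCW x (insert a E) (insert a S) = x a * UWCW x E S := by
    unfold UWCW
    have hd : insert a E \ insert a S = E \ S := by
      rw [Finset.insert_sdiff_insert]
      ext w
      simp only [Finset.mem_sdiff, Finset.mem_insert, not_or]
      constructor
      · rintro ⟨hw, _, hw2⟩; exact ⟨hw, hw2⟩
      · rintro ⟨hw, hw2⟩; exact ⟨hw, fun h => ha (h ▸ hw), hw2⟩
    rw [hd, Finset.prod_insert haS]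
    ring
  rw [h1, h2]
  ring

lemma UWC_doublePeel (f : Finset α → ℝ) (x : α → ℝ) {a b : α} (hab : a ≠ b) :
    multilinearExt f x
      = ∑ S ∈ (((univ : Finset α).erase a).erase b).powerset,
          (x b * (x a * f (insert a (insert b S)) + (1 - x a) * f (insert b S))
            + (1 - x b) * (x a * f (insert a S) + (1 - x a) * f S))
            * UWCW x (((univ : Finset α).erase a).erase b) S := by
  have h1 : (univ : Finset α) = insert a (univ.erase a) :=
    (Finset.insert_erase (Finset.mem_univ a)).symm
  have hb : b ∈ (univ : Finset α).erase a :=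
    Finset.mem_erase.2 ⟨hab.symm, Finset.mem_univ b⟩
  have h2 : (univ : Finset α).erase a = insert b (((univ : Finset α).erase a).erase b) :=
    (Finset.insert_erase hb).symm
  have step1 : multilinearExt f x
      = ∑ S ∈ ((univ : Finset α).erase a).powerset,
          (x a * f (insert a S) + (1 - x a) * f S) * UWCW x ((univ : Finset α).erase a) S := by
    have h := UWC_peel f x (Finset.notMem_erase a (univ : Finset α))
    rw [Finset.insert_erase (Finset.mem_univ a)] at h
    rw [multilinearExt_eq_UWCW, h]
  have step2 := UWC_peel (fun S => x a * f (insert a S) + (1 - x a) * f S) x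
    (Finset.notMem_erase b ((univ : Finset α).erase a))
  rw [Finset.insert_erase hb] at step2
  rw [step1, step2]

/-- "Discrete partial derivative" of the multilinear extension at coordinate `a`. -/
noncomputable def Dpart (f : Finset α → ℝ) (x : α → ℝ) (a : α) : ℝ :=
  multilinearExt f (Function.update x a 1) - multilinearExt f (Function.update x a 0)

lemma UWC_corner_a (f : Finset α → ℝ) (x : α → ℝ) {a b : α} (hab : a ≠ b) (c : ℝ) :
    multilinearExt f (Function.update x a c)
      = ∑ S ∈ (((univ : Finset α).erase a).erase b).powerset,
          (x b * (c * f (insert a (insert b S)) + (1 - c) * f (insert b S))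
            + (1 - x b) * (c * f (insert a S) + (1 - c) * f S))
            * UWCW x (((univ : Finset α).erase a).erase b) S := by
  rw [UWC_doublePeel f _ hab]
  refine Finset.sum_congr rfl fun S hS => ?_
  have hya : Function.update x a c a = c := Function.update_self a c x
  have hyb : Function.update x a c b = x b := Function.update_of_ne hab.symm c x
  have hW : UWCW (Function.update x a c) (((univ : Finset α).erase a).erase b) S
      = UWCW x (((univ : Finset α).erase a).erase b) S := by
    refine UWCW_congr (fun w hw => ?_) (Finset.mem_powerset.1 hS)
    have : w ≠ a := (Finset.mem_erase.1 (Finset.mem_erase.1 hw).2).1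
    exact Function.update_of_ne this c x
  rw [hya, hyb, hW]

lemma UWC_corner_b (f : Finset α → ℝ) (x : α → ℝ) {a b : α} (hab : a ≠ b) (c : ℝ) :
    multilinearExt f (Function.update x b c)
      = ∑ S ∈ (((univ : Finset α).erase a).erase b).powerset,
          (c * (x a * f (insert a (insert b S)) + (1 - x a) * f (insert b S))
            + (1 - c) * (x a * f (insert a S) + (1 - x a) * f S))
            * UWCW x (((univ : Finset α).erase a).erase b) S := by
  rw [UWC_doublePeel f _ hab]
  refine Finset.sum_congr rfl fun S hS => ?_
  have hyb : Function.update x b c b = c := Function.update_self b c x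
  have hya : Function.update x b c a = x a := Function.update_of_ne hab c x
  have hW : UWCW (Function.update x b c) (((univ : Finset α).erase a).erase b) S
      = UWCW x (((univ : Finset α).erase a).erase b) S := by
    refine UWCW_congr (fun w hw => ?_) (Finset.mem_powerset.1 hS)
    have : w ≠ b := (Finset.mem_erase.1 hw).1
    exact Function.update_of_ne this c x
  rw [hya, hyb, hW]

/-- Tangent-line inequality: the multilinear extension of a submodular function is convex
along directions `e_a - e_b`. -/
lemma UWC_tangent (f : Finset α → ℝ) (hf : Submodular f) (x : α → ℝ)
    (h0 : ∀ w, 0 ≤ x w) (h1 : ∀ w, x w ≤ 1) {a b : α} (hab : a ≠ b)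
    (lam : ℝ) (y : α → ℝ)
    (hya : y a = x a + lam) (hyb : y b = x b - lam)
    (hyo : ∀ w, w ≠ a → w ≠ b → y w = x w) :
    multilinearExt f x + lam * (Dpart f x a - Dpart f x b) ≤ multilinearExt f y := by
  set E : Finset α := ((univ : Finset α).erase a).erase b with hE
  have hFy : multilinearExt f y
      = ∑ S ∈ E.powerset,
          ((x b - lam) * ((x a + lam) * f (insert a (insert b S))
              + (1 - (x a + lam)) * f (insert b S))
            + (1 - (x b - lam)) * ((x a + lam) * f (insert a S)
              + (1 - (x a + lam)) * f S)) * UWCW x E S := by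
    rw [UWC_doublePeel f y hab]
    refine Finset.sum_congr rfl fun S hS => ?_
    have hW : UWCW y E S = UWCW x E S := by
      refine UWCW_congr (fun w hw => ?_) (Finset.mem_powerset.1 hS)
      exact hyo w (Finset.mem_erase.1 (Finset.mem_erase.1 hw).2).1 (Finset.mem_erase.1 hw).1
    rw [hya, hyb, hW]
  have hDa : Dpart f x a
      = ∑ S ∈ E.powerset,
          (x b * (f (insert a (insert b S)) - f (insert b S))
            + (1 - x b) * (f (insert a S) - f S)) * UWCW x E S := by
    rw [Dpart, UWC_corner_a f x hab 1, UWC_corner_a f x hab 0, ← Finset.sum_sub_distrib]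
    exact Finset.sum_congr rfl fun S _ => by ring
  have hDb : Dpart f x b
      = ∑ S ∈ E.powerset,
          ((x a * f (insert a (insert b S)) + (1 - x a) * f (insert b S))
            - (x a * f (insert a S) + (1 - x a) * f S)) * UWCW x E S := by
    rw [Dpart, UWC_corner_b f x hab 1, UWC_corner_b f x hab 0, ← Finset.sum_sub_distrib]
    exact Finset.sum_congr rfl fun S _ => by ring
  rw [hFy, hDa, hDb, UWC_doublePeel f x hab, ← hE, ← Finset.sum_sub_distrib,
    Finset.mul_sum, ← Finset.sum_add_distrib]
  refine Finset.sum_le_sum fun S hS => ?_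
  have hSE : S ⊆ E := Finset.mem_powerset.1 hS
  have haS : a ∉ S := fun h => by
    have := hSE h; exact (Finset.mem_erase.1 (Finset.mem_erase.1 this).2).1 rfl
  have hbS : b ∉ S := fun h => (Finset.mem_erase.1 (hSE h)).1 rfl
  have hsub : f (insert a (insert b S)) + f S ≤ f (insert a S) + f (insert b S) := by
    have h := hf (insert a S) (insert b S)
    have hun : insert a S ∪ insert b S = insert a (insert b S) := by
      ext w; simp [Finset.mem_union, Finset.mem_insert]; tauto
    have hin : insert a S ∩ insert b S = S := by
      ext w
      simp only [Finset.mem_inter, Finset.mem_insert]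
      constructor
      · rintro ⟨h1 | h1, h2 | h2⟩
        · exact absurd (h1.symm.trans h2) hab
        · exact absurd (h1 ▸ h2) haS
        · exact absurd (h2 ▸ h1) hbS
        · exact h1
      · intro hw; exact ⟨Or.inr hw, Or.inr hw⟩
    rw [hun, hin] at h
    linarith
  have hW : 0 ≤ UWCW x E S := UWCW_nonneg h0 h1 E S
  have key : ((x b - lam) * ((x a + lam) * f (insert a (insert b S))
        + (1 - (x a + lam)) * f (insert b S))
      + (1 - (x b - lam)) * ((x a + lam) * f (insert a S)
        + (1 - (x a + lam)) * f S)) * UWCW x E S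
      = (x b * (x a * f (insert a (insert b S)) + (1 - x a) * f (insert b S))
          + (1 - x b) * (x a * f (insert a S) + (1 - x a) * f S)) * UWCW x E S
        + lam * (((x b * (f (insert a (insert b S)) - f (insert b S))
            + (1 - x b) * (f (insert a S) - f S)) * UWCW x E S)
          - (((x a * f (insert a (insert b S)) + (1 - x a) * f (insert b S))
            - (x a * f (insert a S) + (1 - x a) * f S)) * UWCW x E S))
        + lam ^ 2 * ((f (insert a S) + f (insert b S)
            - f (insert a (insert b S)) - f S) * UWCW x E S) := by
    ring
  have hpos : 0 ≤ lam ^ 2 * ((f (insert a S) + f (insert b S)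
      - f (insert a (insert b S)) - f S) * UWCW x E S) :=
    mul_nonneg (sq_nonneg lam) (mul_nonneg (by linarith) hW)
  linarith [key]

end Aux

section CharVec

lemma charVec_mem {γ : Type*} {S : Set γ} {w : γ} (h : w ∈ S) : charVec S w = 1 := by
  simp [charVec, Set.indicator_of_mem h]

lemma charVec_not_mem {γ : Type*} {S : Set γ} {w : γ} (h : w ∉ S) : charVec S w = 0 := by
  simp [charVec, Set.indicator_of_notMem h]

lemma charVec_nonneg {γ : Type*} (S : Set γ) (w : γ) : 0 ≤ charVec S w := by
  by_cases h : w ∈ S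
  · rw [charVec_mem h]; norm_num
  · rw [charVec_not_mem h]

lemma charVec_le_one {γ : Type*} (S : Set γ) (w : γ) : charVec S w ≤ 1 := by
  by_cases h : w ∈ S
  · rw [charVec_mem h]
  · rw [charVec_not_mem h]; norm_num

end CharVec

/-- Correctness of `UpdateWithCycle`: if `x = ∑ᵢ βᵢ 1_{Bᵢ}` is a convex combination of
characteristic vectors of bases of a matroid `M`, and `B 0`, `B 1` are updated using a
directed cycle `u 0, v 0, …, u (l-1), v (l-1)` in `D_M(B 0, B 1)` (with probability
`β 1 / (β 0 + β 1)` replace `B 0` by `B 0 + v i - u i` for uniform `i`, else replace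
`B 1` by `B 1 + u (i+1) - v i` for uniform `i`), while `Bᵢ` for `i ≥ 2` are unchanged,
then `E[F(x')] ≥ F(x)` for the multilinear extension `F` of any submodular `f`. -/
theorem updateWithCycle_multilinear_ge {α : Type*} [Fintype α] [DecidableEq α]
    (f : Finset α → ℝ) (hf : Submodular f) (M : Matroid α)
    (t : ℕ) [NeZero t] (ht : 2 ≤ t) (β : Fin t → ℝ)
    (hβ : ∀ i, 0 ≤ β i) (hβsum : ∑ i, β i = 1) (B : Fin t → Set α)
    (hB : ∀ i, M.IsBase (B i)) (hβ01 : 0 < β 0 + β 1)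
    (l : ℕ) [NeZero l] (u v : ZMod l → α)
    (hu : ∀ i, u i ∈ B 0 \ B 1) (hv : ∀ i, v i ∈ B 1 \ B 0)
    (he1 : ∀ i, M.Indep (insert (v i) (B 0 \ {u i})))
    (he2 : ∀ i, M.Indep (insert (u (i + 1)) (B 1 \ {v i})))
    (x x1 x2 : _) (hx : x = fun w => ∑ j, β j * charVec (B j) w)
    (hx1 : x1 = fun (i : ZMod l) (w : α) =>
      x w - β 0 * charVec (B 0) w + β 0 * charVec (insert (v i) (B 0 \ {u i})) w)
    (hx2 : x2 = fun (i : ZMod l) (w : α) =>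
      x w - β 1 * charVec (B 1) w + β 1 * charVec (insert (u (i + 1)) (B 1 \ {v i})) w) :
    multilinearExt f x ≤
      (β 1 / (β 0 + β 1)) * ((l : ℝ)⁻¹ * ∑ i : ZMod l, multilinearExt f (x1 i))
      + (β 0 / (β 0 + β 1)) * ((l : ℝ)⁻¹ * ∑ i : ZMod l, multilinearExt f (x2 i)) := by
  -- bounds on x
  have h0 : ∀ w, 0 ≤ x w := by
    intro w
    simp only [hx]
    exact Finset.sum_nonneg fun j _ => mul_nonneg (hβ j) (charVec_nonneg _ _)
  have h1 : ∀ w, x w ≤ 1 := by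
    intro w
    simp only [hx]
    calc ∑ j, β j * charVec (B j) w ≤ ∑ j, β j :=
          Finset.sum_le_sum fun j _ => mul_le_of_le_one_right (hβ j) (charVec_le_one _ _)
      _ = 1 := hβsum
  -- tangent inequalities for the first kind of update
  have key1 : ∀ i : ZMod l, multilinearExt f x
      + β 0 * (Dpart f x (v i) - Dpart f x (u i)) ≤ multilinearExt f (x1 i) := by
    intro i
    have hne : v i ≠ u i := fun h => (hv i).2 (by rw [h]; exact (hu i).1)
    refine UWC_tangent f hf x h0 h1 hne (β 0) (x1 i) ?_ ?_ ?_
    · simp only [hx1]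
      rw [charVec_not_mem (hv i).2, charVec_mem (Set.mem_insert _ _)]
      ring
    · simp only [hx1]
      rw [charVec_mem (hu i).1, charVec_not_mem (show u i ∉ insert (v i) (B 0 \ {u i}) by
        intro h
        rcases h with h | h
        · exact hne h.symm
        · exact h.2 rfl)]
      ring
    · intro w hwa hwb
      simp only [hx1]
      by_cases hw : w ∈ B 0
      · rw [charVec_mem hw, charVec_mem (Set.mem_insert_of_mem _ ((Set.mem_diff w).mpr ⟨hw, by simp [hwb]⟩))]
        ring
      · rw [charVec_not_mem hw, charVec_not_mem (show w ∉ insert (v i) (B 0 \ {u i}) by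
          intro h
          rcases h with h | h
          · exact hwa h
          · exact hw h.1)]
        ring
  -- tangent inequalities for the second kind of update
  have key2 : ∀ i : ZMod l, multilinearExt f x
      + β 1 * (Dpart f x (u (i + 1)) - Dpart f x (v i)) ≤ multilinearExt f (x2 i) := by
    intro i
    have hne : u (i + 1) ≠ v i := fun h => (hu (i + 1)).2 (by rw [h]; exact (hv i).1)
    refine UWC_tangent f hf x h0 h1 hne (β 1) (x2 i) ?_ ?_ ?_
    · simp only [hx2]
      rw [charVec_not_mem (hu (i + 1)).2, charVec_mem (Set.mem_insert _ _)]
      ring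
    · simp only [hx2]
      rw [charVec_mem (hv i).1, charVec_not_mem (show v i ∉ insert (u (i + 1)) (B 1 \ {v i}) by
        intro h
        rcases h with h | h
        · exact hne h.symm
        · exact h.2 rfl)]
      ring
    · intro w hwa hwb
      simp only [hx2]
      by_cases hw : w ∈ B 1
      · rw [charVec_mem hw, charVec_mem (Set.mem_insert_of_mem _ ((Set.mem_diff w).mpr ⟨hw, by simp [hwb]⟩))]
        ring
      · rw [charVec_not_mem hw, charVec_not_mem (show w ∉ insert (u (i + 1)) (B 1 \ {v i}) by
          intro h
          rcases h with h | h
          · exact hwa h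
          · exact hw h.1)]
        ring
  -- sum the inequalities
  have hshift : ∑ i : ZMod l, Dpart f x (u (i + 1)) = ∑ i : ZMod l, Dpart f x (u i) :=
    Fintype.sum_equiv (Equiv.addRight 1) _ _ (fun i => rfl)
  set Fx := multilinearExt f x with hFx
  set Sv := ∑ i : ZMod l, Dpart f x (v i) with hSv
  set Su := ∑ i : ZMod l, Dpart f x (u i) with hSu
  have hA : (l : ℝ) * Fx + β 0 * (Sv - Su) ≤ ∑ i : ZMod l, multilinearExt f (x1 i) := by
    have h := Finset.sum_le_sum (fun i (_ : i ∈ (univ : Finset (ZMod l))) => key1 i)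
    have e : ∑ i : ZMod l, (Fx + β 0 * (Dpart f x (v i) - Dpart f x (u i)))
        = (l : ℝ) * Fx + β 0 * (Sv - Su) := by
      rw [Finset.sum_add_distrib, Finset.sum_const, Finset.card_univ, ZMod.card,
        nsmul_eq_mul, ← Finset.mul_sum, Finset.sum_sub_distrib]
    rw [e] at h
    exact h
  have hB2 : (l : ℝ) * Fx + β 1 * (Su - Sv) ≤ ∑ i : ZMod l, multilinearExt f (x2 i) := by
    have h := Finset.sum_le_sum (fun i (_ : i ∈ (univ : Finset (ZMod l))) => key2 i)
    have e : ∑ i : ZMod l, (Fx + β 1 * (Dpart f x (u (i + 1)) - Dpart f x (v i)))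
        = (l : ℝ) * Fx + β 1 * (Su - Sv) := by
      rw [Finset.sum_add_distrib, Finset.sum_const, Finset.card_univ, ZMod.card,
        nsmul_eq_mul, ← Finset.mul_sum, Finset.sum_sub_distrib, hshift]
    rw [e] at h
    exact h
  -- final algebra
  have hl : (0 : ℝ) < (l : ℝ) := by exact_mod_cast Nat.pos_of_ne_zero (NeZero.ne l)
  have hln : (l : ℝ) ≠ 0 := ne_of_gt hl
  have hs : β 0 + β 1 ≠ 0 := ne_of_gt hβ01
  have hc1 : 0 ≤ β 1 / (β 0 + β 1) := div_nonneg (hβ 1) hβ01.le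
  have hc2 : 0 ≤ β 0 / (β 0 + β 1) := div_nonneg (hβ 0) hβ01.le
  have hinv : 0 ≤ (l : ℝ)⁻¹ := inv_nonneg.2 hl.le
  have hkey : β 1 / (β 0 + β 1) * ((l : ℝ)⁻¹ * ((l : ℝ) * Fx + β 0 * (Sv - Su)))
      + β 0 / (β 0 + β 1) * ((l : ℝ)⁻¹ * ((l : ℝ) * Fx + β 1 * (Su - Sv))) = Fx := by
    field_simp
    ring
  calc Fx = β 1 / (β 0 + β 1) * ((l : ℝ)⁻¹ * ((l : ℝ) * Fx + β 0 * (Sv - Su)))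
      + β 0 / (β 0 + β 1) * ((l : ℝ)⁻¹ * ((l : ℝ) * Fx + β 1 * (Su - Sv))) := hkey.symm
    _ ≤ _ := by
        refine add_le_add
          (mul_le_mul_of_nonneg_left (mul_le_mul_of_nonneg_left hA hinv) hc1)
          (mul_le_mul_of_nonneg_left (mul_le_mul_of_nonneg_left hB2 hinv) hc2)
end

section
/- Let M be a matroid of rank r with maximum weight basis B with respect to weights w : V → R, and let w' agree with w except w'(v) < w(v) for a single element v. If v ∉ B, then B is also a maximum weight basis with respect to w'. If v ∈ B, and u is an element of (V \ B) ∪ {v} maximizing w'(u) subject to (B - v) + u being independent, then B - v + u is a maximum weight basis of M with respect to w'. -/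
open Finset

/-- `B` is a maximum weight basis of `M` with respect to weights `w`. -/
def IsMaxWeightBase {α : Type*} [Fintype α] (M : Matroid α) (w : α → ℝ) (B : Set α) : Prop :=
  M.IsBase B ∧ ∀ B' : Set α, M.IsBase B' → ∑ e ∈ B'.toFinite.toFinset, w e ≤ ∑ e ∈ B.toFinite.toFinset, w e

section Aux

variable {α : Type*} [Fintype α] [DecidableEq α]

lemma sum_tf_congr_set (f : α → ℝ) {S T : Set α} (h : S = T) :
    ∑ e ∈ S.toFinite.toFinset, f e = ∑ e ∈ T.toFinite.toFinset, f e := by subst h; rfl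

lemma sum_tf_insert (f : α → ℝ) {S : Set α} {a : α} (ha : a ∉ S) :
    ∑ e ∈ (insert a S).toFinite.toFinset, f e = f a + ∑ e ∈ S.toFinite.toFinset, f e := by
  have h : (insert a S).toFinite.toFinset = insert a S.toFinite.toFinset := by
    ext x; simp
  rw [h, Finset.sum_insert (by simpa using ha)]

lemma sum_tf_diff_singleton (f : α → ℝ) {S : Set α} {a : α} (ha : a ∈ S) :
    ∑ e ∈ S.toFinite.toFinset, f e = f a + ∑ e ∈ (S \ {a}).toFinite.toFinset, f e := by
  have h : S = insert a (S \ {a}) := by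
    rw [Set.insert_diff_singleton, Set.insert_eq_self.2 ha]
  rw [sum_tf_congr_set f h, sum_tf_insert f (by simp)]

lemma indep_base_of_ncard {M : Matroid α} {J B : Set α} (hJ : M.Indep J) (hB : M.IsBase B)
    (h : J.ncard = B.ncard) : M.IsBase J := by
  obtain ⟨B₁, hB₁, hJB₁⟩ := hJ.exists_isBase_superset
  have hc : B₁.ncard = B.ncard := hB₁.ncard_eq_ncard_of_isBase hB
  have hEq : J = B₁ := Set.eq_of_subset_of_ncard_le hJB₁ (by rw [hc, ← h]) B₁.toFinite
  rwa [hEq]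

end Aux

/-- Decremental update of a maximum weight basis: let `B` be a maximum weight basis of `M`
with respect to `w`, and let `w'` agree with `w` except `w' v < w v` at a single element `v`.
If `v ∉ B` then `B` is still a maximum weight basis w.r.t. `w'`.  If `v ∈ B` and `u` is an
element of `(V \ B) ∪ {v}` of maximum `w'`-weight such that `(B - v) + u` is independent,
then `B - v + u` is a maximum weight basis w.r.t. `w'`. -/
theorem maxWeightBase_decremental_update {α : Type*} [Fintype α] [DecidableEq α]
    (M : Matroid α) (w w' : α → ℝ) (B : Set α) (hB : IsMaxWeightBase M w B)
    (v : α) (hv : w' v < w v) (hagree : ∀ e, e ≠ v → w' e = w e) :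
    (v ∉ B → IsMaxWeightBase M w' B) ∧
    (v ∈ B → ∀ u ∈ (Set.univ \ B) ∪ {v},
      M.Indep (insert u (B \ {v})) →
      (∀ u' ∈ (Set.univ \ B) ∪ {v}, M.Indep (insert u' (B \ {v})) → w' u' ≤ w' u) →
      IsMaxWeightBase M w' (insert u (B \ {v}))) := by
  obtain ⟨hBbase, hBmax⟩ := hB
  have hwle : ∀ e, w' e ≤ w e := by
    intro e
    by_cases h : e = v
    · subst h; exact hv.le
    · rw [hagree e h]
  constructor
  · intro hvB
    refine ⟨hBbase, fun B' hB' => ?_⟩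
    calc ∑ e ∈ B'.toFinite.toFinset, w' e
        ≤ ∑ e ∈ B'.toFinite.toFinset, w e := Finset.sum_le_sum (fun e _ => hwle e)
      _ ≤ ∑ e ∈ B.toFinite.toFinset, w e := hBmax B' hB'
      _ = ∑ e ∈ B.toFinite.toFinset, w' e := by
          refine Finset.sum_congr rfl (fun e he => ?_)
          exact (hagree e (fun h => hvB (h ▸ (Set.Finite.mem_toFinset _).1 he))).symm
  · intro hvB u hu hIndep hmax
    have hBvE : B \ {v} ⊆ M.E := Set.diff_subset.trans hBbase.subset_ground
    have hvE : v ∈ M.E := hBbase.subset_ground hvB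
    have huBv : u ∉ B \ {v} := by
      rcases hu with h | h
      · exact fun hc => h.2 hc.1
      · simp only [Set.mem_singleton_iff] at h; subst h; simp
    -- `B''` is a base
    have hcard : (insert u (B \ {v})).ncard = B.ncard := by
      by_cases huv : u = v
      · subst huv
        rw [Set.insert_diff_singleton, Set.insert_eq_self.2 hvB]
      · have huB : u ∉ B := by
          rcases hu with h | h
          · exact h.2
          · simp only [Set.mem_singleton_iff] at h; exact absurd h huv
        exact Set.ncard_exchange huB hvB
    have hB''base : M.IsBase (insert u (B \ {v})) := indep_base_of_ncard hIndep hBbase hcard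
    -- weights agree off `v`
    have hsum_agree : ∀ S : Set α, v ∉ S →
        ∑ e ∈ S.toFinite.toFinset, w' e = ∑ e ∈ S.toFinite.toFinset, w e := by
      intro S hvS
      refine Finset.sum_congr rfl (fun e he => ?_)
      exact hagree e (fun h => hvS (h ▸ (Set.Finite.mem_toFinset _).1 he))
    have hsumB'' : ∑ e ∈ (insert u (B \ {v})).toFinite.toFinset, w' e
        = w' u + ∑ e ∈ (B \ {v}).toFinite.toFinset, w e := by
      rw [sum_tf_insert w' huBv, hsum_agree _ (by simp)]
    have hsumB : ∑ e ∈ B.toFinite.toFinset, w e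
        = w v + ∑ e ∈ (B \ {v}).toFinite.toFinset, w e := sum_tf_diff_singleton w hvB
    refine ⟨hB''base, fun B' hB' => ?_⟩
    rw [hsumB'']
    by_cases hvB' : v ∈ B'
    · -- easy case: `v ∈ B'`
      have hfeasv : w' v ≤ w' u := by
        refine hmax v (Or.inr rfl) ?_
        rw [Set.insert_diff_singleton, Set.insert_eq_self.2 hvB]
        exact hBbase.indep
      have h1 : ∑ e ∈ B'.toFinite.toFinset, w' e
          = w' v + ∑ e ∈ (B' \ {v}).toFinite.toFinset, w e := by
        rw [sum_tf_diff_singleton w' hvB', hsum_agree _ (by simp)]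
      have h2 : ∑ e ∈ B'.toFinite.toFinset, w e
          = w v + ∑ e ∈ (B' \ {v}).toFinite.toFinset, w e := sum_tf_diff_singleton w hvB'
      have h3 := hBmax B' hB'
      rw [h2, hsumB] at h3
      rw [h1]
      linarith
    · -- hard case: `v ∉ B'`
      have hB'i := hB'.indep
      have hvH : v ∉ M.closure (B \ {v}) := hBbase.indep.notMem_closure_sdiff_of_mem hvB
      -- the independent set `insert v (B' ∩ cl(B \ {v}))`
      have hI0 : M.Indep (insert v (B' ∩ M.closure (B \ {v}))) := by
        have hi : M.Indep (B' ∩ M.closure (B \ {v})) := hB'i.subset Set.inter_subset_left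
        rw [hi.insert_indep_iff_of_notMem (fun hc => hvB' hc.1)]
        refine ⟨hvE, fun hc => ?_⟩
        have h1 := M.closure_subset_closure (Set.inter_subset_right
          (s := B') (t := M.closure (B \ {v}))) hc
        rw [M.closure_closure] at h1
        exact hvH h1
      obtain ⟨J, hJ, hIJ⟩ := hI0.subset_isBasis_of_subset (X := insert v B')
        (Set.insert_subset_insert Set.inter_subset_left)
        (Set.insert_subset hvE hB'.subset_ground)
      have hB'basis : M.IsBasis B' (insert v B') :=
        hB'i.isBasis_of_subset_of_subset_closure (Set.subset_insert _ _)
          (by rw [hB'.closure_eq]; exact Set.insert_subset hvE hB'.subset_ground)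
      have hJcard : J.ncard = B'.ncard := by
        have h := hJ.encard_eq_encard hB'basis
        rw [Set.ncard_def, Set.ncard_def, h]
      have hvJ : v ∈ J := hIJ (Set.mem_insert _ _)
      have hJsub : J ⊆ insert v B' := hJ.subset
      -- find `g ∈ B' \ J`
      have hexg : ∃ g, g ∈ B' ∧ g ∉ J := by
        by_contra hcon
        push_neg at hcon
        have hJeq : J = insert v B' := Set.Subset.antisymm hJsub
          (Set.insert_subset hvJ hcon)
        have : (insert v B').ncard = B'.ncard + 1 := Set.ncard_insert_of_notMem hvB'
        rw [hJeq, this] at hJcard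
        omega
      obtain ⟨g, hgB', hgJ⟩ := hexg
      have hgv : g ≠ v := fun h => hvB' (h ▸ hgB')
      -- J = insert v (B' \ {g})
      have hJsub2 : J ⊆ insert v (B' \ {g}) := by
        intro x hx
        rcases hJsub hx with h | h
        · exact Or.inl h
        · exact Or.inr ⟨h, fun hc => hgJ ((Set.mem_singleton_iff.1 hc) ▸ hx)⟩
      have hJeq : J = insert v (B' \ {g}) := by
        refine Set.eq_of_subset_of_ncard_le hJsub2 ?_ (Set.toFinite _)
        rw [Set.ncard_exchange hvB' hgB', hJcard]
      -- g is feasible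
      have hgH : g ∉ M.closure (B \ {v}) :=
        fun hc => hgJ (hIJ (Set.mem_insert_of_mem _ ⟨hgB', hc⟩))
      have hgB : g ∉ B := by
        intro hc
        exact hgH (M.subset_closure (B \ {v}) hBvE ⟨hc, hgv⟩)
      have hgfeas : M.Indep (insert g (B \ {v})) := by
        have hind : M.Indep (B \ {v}) := hBbase.indep.subset Set.diff_subset
        rw [hind.insert_indep_iff_of_notMem (fun hc => hgB hc.1)]
        exact ⟨hB'.subset_ground hgB', hgH⟩
      have hwg : w' g ≤ w' u := hmax g (Or.inl ⟨trivial, hgB⟩) hgfeas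
      have hwg' : w' g = w g := hagree g hgv
      -- J is a base
      have hJbase : M.IsBase J := indep_base_of_ncard hJ.indep hB' hJcard
      -- weight computations
      have hsumJ : ∑ e ∈ J.toFinite.toFinset, w e
          = w v + ∑ e ∈ (B' \ {g}).toFinite.toFinset, w e := by
        rw [sum_tf_congr_set w hJeq, sum_tf_insert w (fun hc => hvB' hc.1)]
      have hsumB' : ∑ e ∈ B'.toFinite.toFinset, w e
          = w g + ∑ e ∈ (B' \ {g}).toFinite.toFinset, w e := sum_tf_diff_singleton w hgB'
      have hJle := hBmax J hJbase
      rw [hsumJ, hsumB] at hJle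
      have h0 : ∑ e ∈ B'.toFinite.toFinset, w' e = ∑ e ∈ B'.toFinite.toFinset, w e :=
        hsum_agree _ hvB'
      rw [h0, hsumB']
      linarith [hwg' ▸ hwg]
end
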